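/- For a comonoid c in Poly_Set (equivalently, a small category C by the Ahman–Uustalu correspondence), the category of c-coalgebras — sets S with κ : S → P(c)(S) satisfying counit and comultiplication equations — is equivalent to the category of functors C → Set (copresheaves on C). -/

import Mathlib

open CategoryTheory

universe u

/-- A coalgebra for the comonad on `Set` induced by the polynomial comonoid corresponding to
a small category `C` (Ahman–Uustalu): a set `S` with `κ : S → P(c)(S)`, i.e. a labelling
`π : S → C₀` together with an action of arrows out of `π s`, satisfying the counit equation
(identities act trivially) and the comultiplication equations (targets and functoriality). -/
structure Coalg (C : Type u) [Category.{u} C] : Type (u + 1) where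
  S : Type u
  π : S → C
  act : (s : S) → (J : C) → (π s ⟶ J) → S
  act_pos : ∀ s J f, π (act s J f) = J
  act_id : ∀ s, act s (π s) (𝟙 (π s)) = s
  act_comp : ∀ s J (f : π s ⟶ J) K (g : J ⟶ K),
    act s K (f ≫ g) = act (act s J f) K (eqToHom (act_pos s J f) ≫ g)

/-- A homomorphism of coalgebras: a function commuting with the structure maps `κ`. -/
@[ext]
structure PCoalgHom {C : Type u} [Category.{u} C] (X Y : Coalg C) : Type u where
  toFun : X.S → Y.S
  map_pos : ∀ s, Y.π (toFun s) = X.π s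
  map_act : ∀ s J (f : X.π s ⟶ J),
    toFun (X.act s J f) = Y.act (toFun s) J (eqToHom (map_pos s) ≫ f)

/-- The category of `c`-coalgebras. -/
instance (C : Type u) [Category.{u} C] : Category (Coalg C) where
  Hom := PCoalgHom
  id X :=
    { toFun := id
      map_pos := fun _ => rfl
      map_act := fun s J f => by simp }
  comp {X Y Z} F G :=
    { toFun := G.toFun ∘ F.toFun
      map_pos := fun s => (G.map_pos _).trans (F.map_pos s)
      map_act := fun s J f => by
        simp [Function.comp, F.map_act, G.map_act, eqToHom_trans] }
  id_comp f := PCoalgHom.ext rfl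
  comp_id f := PCoalgHom.ext rfl
  assoc f g h := PCoalgHom.ext rfl

variable {C : Type u} [Category.{u} C]

@[simp]
theorem Coalg.act_eqToHom (X : Coalg C) (s : X.S) {J : C} (h : X.π s = J) :
    X.act s J (eqToHom h) = s := by
  cases h; exact X.act_id s

/-- A coalgebra gives a copresheaf: fibers of `π`. -/
def toCopresheaf (X : Coalg C) : C ⥤ Type u where
  obj J := { s : X.S // X.π s = J }
  map {J K} f := TypeCat.ofHom fun s => ⟨X.act s.1 K (eqToHom s.2 ≫ f), X.act_pos _ _ _⟩
  map_id J := by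
    ext s
    simpa using X.act_eqToHom s.1 s.2
  map_comp {J K L} f g := by
    ext s
    show X.act s.1 L (eqToHom s.2 ≫ f ≫ g) = X.act (X.act s.1 K (eqToHom s.2 ≫ f)) L (eqToHom (X.act_pos _ _ _) ≫ g)
    rw [← Category.assoc, X.act_comp]

/-- A copresheaf gives a coalgebra: total space. -/
def ofCopresheaf (F : C ⥤ Type u) : Coalg C where
  S := Σ J : C, F.obj J
  π s := s.1
  act s J f := ⟨J, F.map f s.2⟩
  act_pos _ _ _ := rfl
  act_id s := by
    cases s; simp
  act_comp s J f K g := by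
    cases s; simp

def toCopresheafMap {X Y : Coalg C} (φ : X ⟶ Y) : toCopresheaf X ⟶ toCopresheaf Y where
  app J := TypeCat.ofHom fun s => ⟨φ.toFun s.1, (φ.map_pos s.1).trans s.2⟩
  naturality {J K} f := by
    ext s
    apply Subtype.ext
    show φ.toFun (X.act s.1 K (eqToHom s.2 ≫ f)) = Y.act (φ.toFun s.1) K (eqToHom ((φ.map_pos s.1).trans s.2) ≫ f)
    simp [toCopresheaf, φ.map_act, eqToHom_trans_assoc]

def theFunctor : Coalg C ⥤ (C ⥤ Type u) where
  obj := toCopresheaf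
  map := toCopresheafMap
  map_id X := by
    apply NatTrans.ext; funext J; ext s; rfl
  map_comp f g := by
    apply NatTrans.ext; funext J; ext s; rfl

def theInverse : (C ⥤ Type u) ⥤ Coalg C where
  obj := ofCopresheaf
  map {F G} α :=
    { toFun := fun s => ⟨s.1, α.app s.1 s.2⟩
      map_pos := fun _ => rfl
      map_act := fun s J f => by
        obtain ⟨I, x⟩ := s
        have h := types_congr_hom (α.naturality f) x
        simp only [types_comp_apply] at h
        show (⟨J, α.app J (F.map f x)⟩ : Σ J, G.obj J) = ⟨J, G.map (eqToHom rfl ≫ f) (α.app I x)⟩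
        rw [eqToHom_refl, Category.id_comp]
        exact congrArg (Sigma.mk J) h }
  map_id F := by
    apply PCoalgHom.ext; funext s; rfl
  map_comp f g := by
    apply PCoalgHom.ext; funext s; rfl

theorem fiber_heq (X : Coalg C) {J K : C} (h : J = K)
    (a : { s : X.S // X.π s = J }) (b : { s : X.S // X.π s = K })
    (hv : a.1 = b.1) : HEq a b := by
  subst h; exact heq_of_eq (Subtype.ext hv)

/-- For a polynomial comonoid in `Set`, equivalently a small category `C`, the category of
coalgebras is equivalent to the category of copresheaves `C ⥤ Set`. -/
theorem coalg_equiv_copresheaves (C : Type u) [Category.{u} C] :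
    Nonempty (Coalg C ≌ C ⥤ Type u) := by
  refine ⟨CategoryTheory.Equivalence.mk theFunctor theInverse ?_ ?_⟩
  · -- unit : 𝟭 (Coalg C) ≅ theFunctor ⋙ theInverse
    refine NatIso.ofComponents (fun X => ?_) ?_
    · exact
        { hom :=
            { toFun := fun s => ⟨X.π s, ⟨s, rfl⟩⟩
              map_pos := fun s => rfl
              map_act := fun s J f => by
                apply Sigma.ext (X.act_pos s J f)
                refine fiber_heq X (X.act_pos s J f) _ _ ?_
                show X.act s J f = X.act s J (eqToHom rfl ≫ eqToHom rfl ≫ f)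
                simp }
          inv :=
            { toFun := fun s => s.2.1
              map_pos := fun s => s.2.2
              map_act := fun s J f => by
                cases s with
                | mk J x =>
                  simp [theInverse, ofCopresheaf, theFunctor, toCopresheaf] }
          hom_inv_id := by apply PCoalgHom.ext; funext s; rfl
          inv_hom_id := by
            apply PCoalgHom.ext; funext s
            cases s with
            | mk J x => exact Sigma.ext x.2 (by cases x with | mk v h => cases h; rfl) }
    · intro X Y φ
      apply PCoalgHom.ext; funext s
      apply Sigma.ext (φ.map_pos s)
      exact fiber_heq Y (φ.map_pos s) _ _ rfl
  · -- counit : theInverse ⋙ theFunctor ≅ 𝟭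
    refine NatIso.ofComponents (fun F => ?_) ?_
    · refine NatIso.ofComponents (fun J => ?_) ?_
      · exact
          { hom := TypeCat.ofHom fun s => cast (congrArg F.obj s.2) s.1.2
            inv := TypeCat.ofHom fun x => ⟨⟨J, x⟩, rfl⟩
            hom_inv_id := by
              ext s
              obtain ⟨⟨K, x⟩, h⟩ := s
              cases h; rfl
            inv_hom_id := by ext x; rfl }
      · intro J K f
        ext s
        obtain ⟨⟨L, x⟩, h⟩ := s
        cases h
        simp [theFunctor, theInverse, toCopresheaf, ofCopresheaf]
        exact (congrArg (fun g => F.map g x) (Category.id_comp f) :)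
    · intro F G α
      apply NatTrans.ext; funext J; ext s
      obtain ⟨⟨L, x⟩, h⟩ := s
      cases h
      rfl
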